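/- Let d ≥ 2, β ≥ 70, and α̃ := 2 + 2·log d + β·log² d. Define on Ω := {y ∈ ℝ^d : y_k > 0 ∀k, Λ(y) := Σ_k y_k ≤ 1} the regularizer ψ(y) := −α̃·log Λ(y) + (1/Λ(y))·Σ_k y_k·log y_k, with Bregman divergence D_ψ(z‖y) := ψ(z) − ψ(y) − ⟨∇ψ(y), z − y⟩. Let y, z ∈ Ω, set x := y/Λ(y), θ := z/Λ(z) and ρ := Λ(z)/Λ(y), and suppose ρ ∈ [1 − ε, 1 + ε] for some ε ∈ (0, 2/5). Then D_ψ(z‖y) ≥ ((1 − ε)/4)·‖θ − x‖₁². -/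

import Mathlib

/-- Total mass `Λ(y) = Σ_k y_k`. -/
noncomputable def lmass {d : ℕ} (y : Fin d → ℝ) : ℝ := ∑ k, y k

/-- The lifted regularizer `ψ(y) = −α̃ log Λ(y) + (1/Λ(y)) Σ_k y_k log y_k`. -/
noncomputable def psiReg {d : ℕ} (αt : ℝ) (y : Fin d → ℝ) : ℝ :=
  -αt * Real.log (lmass y) + (1 / lmass y) * ∑ k, y k * Real.log (y k)

/-- The gradient of `ψ` on the (strictly positive) lifted simplex:
`∂ψ/∂y_i = −(α̃−1)/Λ(y) − (1/Λ(y)) Σ_k x_k log x_k + (log x_i)/Λ(y)`, `x = y/Λ(y)`. -/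
noncomputable def gradPsi {d : ℕ} (αt : ℝ) (y : Fin d → ℝ) (i : Fin d) : ℝ :=
  -(αt - 1) / lmass y
    - (1 / lmass y) * ∑ k, (y k / lmass y) * Real.log (y k / lmass y)
    + Real.log (y i / lmass y) / lmass y

/-- Bregman divergence `D_ψ(z‖y) = ψ(z) − ψ(y) − ⟨∇ψ(y), z − y⟩`. -/
noncomputable def DPsi {d : ℕ} (αt : ℝ) (z y : Fin d → ℝ) : ℝ :=
  psiReg αt z - psiReg αt y - ∑ i, gradPsi αt y i * (z i - y i)


section BregmanAux
open Real Set

/-- Padé [2/2] lower bound for log on `[1, ∞)`. -/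
lemma pade2_lower {t : ℝ} (ht : 1 ≤ t) :
    3 * (t ^ 2 - 1) / (t ^ 2 + 4 * t + 1) ≤ Real.log t := by
  set F : ℝ → ℝ := fun s => Real.log s - 3 * (s ^ 2 - 1) / (s ^ 2 + 4 * s + 1) with hF
  have key : ∀ s : ℝ, 1 ≤ s → HasDerivAt F
      (s⁻¹ - (6 * s * (s ^ 2 + 4 * s + 1) - 3 * (s ^ 2 - 1) * (2 * s + 4)) /
        (s ^ 2 + 4 * s + 1) ^ 2) s := by
    intro s hs
    have hs0 : s ≠ 0 := by nlinarith
    have hQ : s ^ 2 + 4 * s + 1 ≠ 0 := by nlinarith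
    have h1 : HasDerivAt Real.log s⁻¹ s := Real.hasDerivAt_log hs0
    have h2 : HasDerivAt (fun s : ℝ => 3 * (s ^ 2 - 1)) (6 * s) s := by
      have := ((hasDerivAt_pow 2 s).sub_const 1).const_mul (3 : ℝ)
      exact this.congr_deriv (by norm_num; ring)
    have h3 : HasDerivAt (fun s : ℝ => s ^ 2 + 4 * s + 1) (2 * s + 4) s := by
      have := (((hasDerivAt_pow 2 s).add ((hasDerivAt_id' s).const_mul 4)).add_const 1)
      exact this.congr_deriv (by norm_num)
    exact h1.sub (h2.div h3 hQ)
  have hmono : MonotoneOn F (Ici 1) := by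
    apply monotoneOn_of_deriv_nonneg (convex_Ici 1)
    · intro s hs
      exact (key s hs).continuousAt.continuousWithinAt
    · intro s hs
      rw [interior_Ici] at hs
      exact ((key s (le_of_lt hs)).differentiableAt).differentiableWithinAt
    · intro s hs
      rw [interior_Ici] at hs
      have hs1 : 1 ≤ s := le_of_lt hs
      rw [(key s hs1).deriv]
      have hs0 : 0 < s := by linarith
      have hQ : 0 < s ^ 2 + 4 * s + 1 := by nlinarith
      have heq : s⁻¹ - (6 * s * (s ^ 2 + 4 * s + 1) - 3 * (s ^ 2 - 1) * (2 * s + 4)) /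
          (s ^ 2 + 4 * s + 1) ^ 2 = (s - 1) ^ 4 / (s * (s ^ 2 + 4 * s + 1) ^ 2) := by
        field_simp
        ring
      rw [heq]
      positivity
  have h01 : F 1 ≤ F t := hmono (by simp [mem_Ici]) (mem_Ici.mpr ht) ht
  have hF1 : F 1 = 0 := by norm_num [hF]
  have h0 : (0:ℝ) ≤ F t := by linarith
  have hFt : F t = Real.log t - 3 * (t ^ 2 - 1) / (t ^ 2 + 4 * t + 1) := rfl
  rw [hFt] at h0
  linarith

/-- Padé-type upper bound for log on `[1, ∞)`. -/
lemma pade_upper {s : ℝ} (hs : 1 ≤ s) :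
    Real.log s ≤ (s - 1) * (s + 5) / (2 * (2 * s + 1)) := by
  set F : ℝ → ℝ := fun s => (s - 1) * (s + 5) / (2 * (2 * s + 1)) - Real.log s with hF
  have key : ∀ u : ℝ, 1 ≤ u → HasDerivAt F
      (((1 * (u + 5) + (u - 1) * 1) * (2 * (2 * u + 1)) - (u - 1) * (u + 5) * (2 * (2 * 1))) /
        (2 * (2 * u + 1)) ^ 2 - u⁻¹) u := by
    intro u hu
    have hu0 : u ≠ 0 := by nlinarith
    have hQ : 2 * (2 * u + 1) ≠ 0 := by nlinarith
    have h1 : HasDerivAt Real.log u⁻¹ u := Real.hasDerivAt_log hu0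
    have h2 : HasDerivAt (fun v : ℝ => (v - 1) * (v + 5)) (1 * (u + 5) + (u - 1) * 1) u :=
      ((hasDerivAt_id' u).sub_const 1).mul ((hasDerivAt_id' u).add_const 5)
    have h3 : HasDerivAt (fun v : ℝ => 2 * (2 * v + 1)) (2 * (2 * 1)) u :=
      (((hasDerivAt_id' u).const_mul 2).add_const 1).const_mul (2 : ℝ)
    exact (h2.div h3 hQ).sub h1
  have hmono : MonotoneOn F (Ici 1) := by
    apply monotoneOn_of_deriv_nonneg (convex_Ici 1)
    · intro u hu
      exact (key u hu).continuousAt.continuousWithinAt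
    · intro u hu
      rw [interior_Ici] at hu
      exact ((key u (le_of_lt hu)).differentiableAt).differentiableWithinAt
    · intro u hu
      rw [interior_Ici] at hu
      have hu1 : 1 ≤ u := le_of_lt hu
      rw [(key u hu1).deriv]
      have hu0 : 0 < u := by linarith
      have hQ : 0 < 2 * u + 1 := by linarith
      have heq : ((1 * (u + 5) + (u - 1) * 1) * (2 * (2 * u + 1)) -
          (u - 1) * (u + 5) * (2 * (2 * 1))) / (2 * (2 * u + 1)) ^ 2 - u⁻¹
          = (u - 1) ^ 3 / (u * (2 * u + 1) ^ 2) := by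
        field_simp
        ring
      rw [heq]
      apply div_nonneg (pow_nonneg (by linarith) 3) (by positivity)
  have h01 : F 1 ≤ F s := hmono (by simp [mem_Ici]) (mem_Ici.mpr hs) hs
  have hF1 : F 1 = 0 := by norm_num [hF]
  have h0 : (0:ℝ) ≤ F s := by linarith
  have hFs : F s = (s - 1) * (s + 5) / (2 * (2 * s + 1)) - Real.log s := rfl
  rw [hFs] at h0
  linarith

/-- `v² ≤ exp v` for `v ≥ 0`. -/
lemma sq_le_exp' {v : ℝ} (hv : 0 ≤ v) : v ^ 2 ≤ Real.exp v := by
  have h := Real.add_one_le_exp (v / 4)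
  have h4 : Real.exp v = (Real.exp (v / 4)) ^ 4 := by
    rw [← Real.exp_nat_mul]
    norm_num
    ring_nf
  have hp : (v / 4 + 1) ^ 4 ≤ (Real.exp (v / 4)) ^ 4 :=
    pow_le_pow_left₀ (by linarith) (by linarith) 4
  nlinarith [sq_nonneg (1 - v / 4), sq_nonneg v, sq_nonneg (v * (1 - v/4))]

/-- `s · (log s)² ≤ 1` for `s ∈ (0, 1]`. -/
lemma mul_sq_log_le_one {s : ℝ} (h0 : 0 < s) (h1 : s ≤ 1) : s * (Real.log s) ^ 2 ≤ 1 := by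
  have hls : Real.log s ≤ 0 := Real.log_nonpos h0.le h1
  have h := sq_le_exp' (neg_nonneg.mpr hls)
  rw [Real.exp_neg, Real.exp_log h0, neg_sq] at h
  calc s * (Real.log s) ^ 2 ≤ s * s⁻¹ := mul_le_mul_of_nonneg_left h h0.le
    _ = 1 := mul_inv_cancel₀ h0.ne'

/-- Per-coordinate energy bound: `a·(log(aD))² ≤ a·(log D)² + 1/D`. -/
lemma energy_pc {a D : ℝ} (ha : 0 < a) (ha1 : a ≤ 1) (hD : 1 ≤ D) :
    a * (Real.log (a * D)) ^ 2 ≤ a * (Real.log D) ^ 2 + 1 / D := by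
  have hD0 : 0 < D := by linarith
  rcases le_or_gt 1 (a * D) with h | h
  · have h1 : 0 ≤ Real.log (a * D) := Real.log_nonneg h
    have h2 : Real.log (a * D) ≤ Real.log D := by
      apply Real.log_le_log (by positivity)
      nlinarith
    have h3 : (Real.log (a * D)) ^ 2 ≤ (Real.log D) ^ 2 := by nlinarith
    have : a * (Real.log (a * D)) ^ 2 ≤ a * (Real.log D) ^ 2 :=
      mul_le_mul_of_nonneg_left h3 ha.le
    have h4 : 0 ≤ 1 / D := by positivity
    linarith
  · have hkey := mul_sq_log_le_one (show 0 < a * D by positivity) h.le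
    have heq : a * (Real.log (a * D)) ^ 2 = (a * D * (Real.log (a * D)) ^ 2) / D := by
      field_simp
    rw [heq]
    have h5 : (a * D * (Real.log (a * D)) ^ 2) / D ≤ 1 / D := by gcongr
    have h6 : 0 ≤ a * (Real.log D) ^ 2 := by positivity
    linarith


/-- Quadratic lower bound on the per-coordinate KL term. -/
lemma kl_quad {a b : ℝ} (ha : 0 < a) (hb : 0 < b) :
    (3 / 2) * (b - a) ^ 2 ≤ (b + 2 * a) * (b * (Real.log b - Real.log a) + a - b) := by
  rcases le_total a b with h | h
  · have ht : 1 ≤ b / a := (one_le_div ha).mpr h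
    have hk := pade2_lower ht
    have hQ : (0:ℝ) < b ^ 2 + 4 * a * b + a ^ 2 := by positivity
    have heq : 3 * ((b / a) ^ 2 - 1) / ((b / a) ^ 2 + 4 * (b / a) + 1)
        = 3 * (b ^ 2 - a ^ 2) / (b ^ 2 + 4 * a * b + a ^ 2) := by
      rw [div_eq_div_iff (by positivity) hQ.ne']
      field_simp
    rw [heq, Real.log_div hb.ne' ha.ne'] at hk
    have hk2 : 3 * (b ^ 2 - a ^ 2) ≤ (Real.log b - Real.log a) * (b ^ 2 + 4 * a * b + a ^ 2) := by
      rw [div_le_iff₀ hQ] at hk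
      linarith
    have hk3 := mul_le_mul_of_nonneg_left hk2
      (show (0:ℝ) ≤ b * (b + 2 * a) by positivity)
    nlinarith [hk3, hQ, pow_nonneg (sub_nonneg.mpr h) 4, sq_nonneg ((b - a) ^ 2), ha.le, hb.le,
      sq_nonneg (b - a)]
  · have hs : 1 ≤ a / b := (one_le_div hb).mpr h
    have hu := pade_upper hs
    have hQ : (0:ℝ) < 2 * b * (2 * a + b) := by positivity
    have heq : (a / b - 1) * (a / b + 5) / (2 * (2 * (a / b) + 1))
        = (a - b) * (a + 5 * b) / (2 * b * (2 * a + b)) := by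
      rw [div_eq_div_iff (by positivity) hQ.ne']
      field_simp
    rw [heq, Real.log_div ha.ne' hb.ne'] at hu
    have hu2 : (Real.log a - Real.log b) * (2 * b * (2 * a + b)) ≤ (a - b) * (a + 5 * b) := by
      rw [le_div_iff₀ hQ] at hu
      linarith
    have hu3 := mul_le_mul_of_nonneg_left hu2 (show (0:ℝ) ≤ b + 2 * a by positivity)
    nlinarith [hu3, hQ, ha.le, hb.le, sq_nonneg (a - b)]

/-- Padé-1 consequence: `(b−a)·log(b/a) ≤ 2κ` for `b ≥ a`. -/
lemma ratio_log_le {a b : ℝ} (ha : 0 < a) (hab : a ≤ b) :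
    (b - a) * (Real.log b - Real.log a)
      ≤ 2 * (b * (Real.log b - Real.log a) + a - b) := by
  have hb : 0 < b := lt_of_lt_of_le ha hab
  have ht : 1 ≤ b / a := (one_le_div ha).mpr hab
  have hk := pade2_lower ht
  have hQ : (0:ℝ) < b ^ 2 + 4 * a * b + a ^ 2 := by positivity
  have heq : 3 * ((b / a) ^ 2 - 1) / ((b / a) ^ 2 + 4 * (b / a) + 1)
      = 3 * (b ^ 2 - a ^ 2) / (b ^ 2 + 4 * a * b + a ^ 2) := by
    rw [div_eq_div_iff (by positivity) hQ.ne']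
    field_simp
  rw [heq, Real.log_div hb.ne' ha.ne'] at hk
  have hk2 : 3 * (b ^ 2 - a ^ 2) ≤ (Real.log b - Real.log a) * (b ^ 2 + 4 * a * b + a ^ 2) := by
    rw [div_le_iff₀ hQ] at hk
    linarith
  have hk3 := mul_le_mul_of_nonneg_left hk2 (show (0:ℝ) ≤ a + b by positivity)
  nlinarith [hk3, hQ, pow_nonneg (sub_nonneg.mpr hab) 3]

/-- Nonnegativity of the per-coordinate KL term. -/
lemma kl_nonneg' {a b : ℝ} (ha : 0 < a) (hb : 0 < b) :
    0 ≤ b * (Real.log b - Real.log a) + a - b := by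
  have h := kl_quad ha hb
  nlinarith [sq_nonneg (b - a)]


/-- Finite Pinsker-type inequality with constant 1/2. -/
lemma pinsker {n : ℕ} (a b : Fin n → ℝ) (ha : ∀ k, 0 < a k) (hb : ∀ k, 0 < b k)
    (hsa : ∑ k, a k = 1) (hsb : ∑ k, b k = 1) :
    (∑ k, |b k - a k|) ^ 2
      ≤ 2 * ∑ k, (b k * (Real.log (b k) - Real.log (a k)) + a k - b k) := by
  have hCS := Finset.sq_sum_div_le_sum_sq_div Finset.univ
      (fun k => |b k - a k|) (g := fun k => b k + 2 * a k)
      (fun k _ => by have := ha k; have := hb k; positivity)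
  have hw : ∑ k, (b k + 2 * a k) = 3 := by
    rw [Finset.sum_add_distrib, ← Finset.mul_sum, hsa, hsb]
    norm_num
  rw [hw] at hCS
  have hpc : ∀ k : Fin n, |b k - a k| ^ 2 / (b k + 2 * a k)
      ≤ (2 / 3) * (b k * (Real.log (b k) - Real.log (a k)) + a k - b k) := by
    intro k
    have hq := kl_quad (ha k) (hb k)
    have hwp : (0:ℝ) < b k + 2 * a k := by have := ha k; have := hb k; positivity
    rw [div_le_iff₀ hwp, sq_abs]
    nlinarith
  have h2 : ∑ k, (|b k - a k| ^ 2 / (b k + 2 * a k))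
      ≤ ∑ k, (2 / 3) * (b k * (Real.log (b k) - Real.log (a k)) + a k - b k) :=
    Finset.sum_le_sum (fun k _ => hpc k)
  rw [← Finset.mul_sum] at h2
  have h3 := le_trans hCS h2
  linarith

set_option maxHeartbeats 1000000 in
/-- Per-coordinate master inequality. -/
lemma percoord {a b δ ε Dr : ℝ} (ha : 0 < a) (hb : 0 < b) (hD : 1 ≤ Dr)
    (hδ : |δ| ≤ ε) (hε : ε ≤ 2 / 5) :
    -((1 + ε) / 2) * (b * (Real.log b - Real.log a) + a - b)
      - δ ^ 2 * (a * (Real.log (a * Dr)) ^ 2 + 2 * b * (Real.log (b * Dr)) ^ 2 + 5 * b)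
      ≤ δ * (a - b) * Real.log (a * Dr) := by
  have hD0 : 0 < Dr := lt_of_lt_of_le one_pos hD
  set κ := b * (Real.log b - Real.log a) + a - b with hκdef
  set wa := Real.log (a * Dr) with hwad
  set wb := Real.log (b * Dr) with hwbd
  have hκ0 : 0 ≤ κ := kl_nonneg' ha hb
  have hε0 : 0 ≤ ε := le_trans (abs_nonneg δ) hδ
  have hwdiff : wb - wa = Real.log b - Real.log a := by
    rw [hwad, hwbd, Real.log_mul hb.ne' hD0.ne', Real.log_mul ha.ne' hD0.ne']
    ring
  have hq := kl_quad ha hb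
  have hεκ : 0 ≤ ε * κ := mul_nonneg hε0 hκ0
  have hbwb : 0 ≤ δ ^ 2 * (2 * b * wb ^ 2 + 5 * b) := by positivity
  have hawa : 0 ≤ δ ^ 2 * (a * wa ^ 2) := by positivity
  rcases le_total b a with hba | hab
  · -- case b ≤ a
    have h2aκ : (b - a) ^ 2 ≤ 2 * a * κ := by nlinarith
    have key2 : (4 * a) * 0 ≤ (4 * a) * (δ * (a - b) * wa + (1/2) * κ + δ ^ 2 * (a * wa ^ 2)) := by
      have iden : (4 * a) * (δ * (a - b) * wa + (1/2) * κ + δ ^ 2 * (a * wa ^ 2))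
          = ((a - b) + 2 * a * δ * wa) ^ 2 - (b - a) ^ 2 + 2 * a * κ := by ring
      rw [mul_zero, iden]
      linarith [sq_nonneg ((a - b) + 2 * a * δ * wa), h2aκ]
    have hX : 0 ≤ δ * (a - b) * wa + (1/2) * κ + δ ^ 2 * (a * wa ^ 2) :=
      le_of_mul_le_mul_left key2 (by linarith)
    nlinarith [hX, hεκ, hbwb]
  · -- case a ≤ b
    have h2bκ : (b - a) ^ 2 ≤ 2 * b * κ := by nlinarith
    have hrl : (b - a) * (wb - wa) ≤ 2 * κ := by
      rw [hwdiff]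
      exact ratio_log_le ha hab
    have hr0 : 0 ≤ wb - wa := by
      rw [hwdiff]
      have := Real.log_le_log ha hab
      linarith
    have hL3 : (b - a) * (wb - wa) ≤ κ + b := by
      have hbr : b * (wb - wa) = κ + b - a := by rw [hwdiff, hκdef]; ring
      have ha2 : 0 ≤ a * (wb - wa) := mul_nonneg ha.le hr0
      nlinarith
    -- s2 : δ(a−b)wb ≥ −(1/4)κ − 2δ²b wb²
    have key2 : (8 * b) * 0 ≤ (8 * b) * (δ * (a - b) * wb + (1/4) * κ + 2 * δ ^ 2 * (b * wb ^ 2)) := by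
      have iden : (8 * b) * (δ * (a - b) * wb + (1/4) * κ + 2 * δ ^ 2 * (b * wb ^ 2))
          = ((b - a) - 4 * b * δ * wb) ^ 2 - (b - a) ^ 2 + 2 * b * κ := by ring
      rw [mul_zero, iden]
      linarith [sq_nonneg ((b - a) - 4 * b * δ * wb), h2bκ]
    have s2 : 0 ≤ δ * (a - b) * wb + (1/4) * κ + 2 * δ ^ 2 * (b * wb ^ 2) :=
      le_of_mul_le_mul_left key2 (by linarith)
    -- s4 : δ(b−a)(wb−wa) ≥ −(ε + 1/20)κ − 5δ²b
    have hX0 : 0 ≤ (b - a) * (wb - wa) := mul_nonneg (by linarith) hr0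
    have habs : -(|δ| * ((b - a) * (wb - wa))) ≤ δ * ((b - a) * (wb - wa)) := by
      have h1 := neg_abs_le (δ * ((b - a) * (wb - wa)))
      rw [abs_mul, abs_of_nonneg hX0] at h1
      exact h1
    have hδs : |δ| ≤ 1/20 + 5 * δ ^ 2 := by
      nlinarith [sq_nonneg (10 * |δ| - 1), sq_abs δ]
    have e2 : |δ| * κ ≤ ε * κ := mul_le_mul_of_nonneg_right hδ hκ0
    have s4 : -((ε + 1/20) * κ + 5 * (δ ^ 2 * b)) ≤ δ * ((b - a) * (wb - wa)) := by
      rcases le_total κ b with hκb | hbκ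
      · have hb1 : |δ| * ((b - a) * (wb - wa)) ≤ |δ| * (2 * κ) :=
          mul_le_mul_of_nonneg_left hrl (abs_nonneg δ)
        have e3 : |δ| * κ ≤ (1/20) * κ + 5 * (δ ^ 2 * κ) := by
          nlinarith [mul_le_mul_of_nonneg_right hδs hκ0]
        have e4 : δ ^ 2 * κ ≤ δ ^ 2 * b := mul_le_mul_of_nonneg_left hκb (sq_nonneg δ)
        nlinarith [habs, hb1, e2, e3, e4]
      · have hb1 : |δ| * ((b - a) * (wb - wa)) ≤ |δ| * (κ + b) :=
          mul_le_mul_of_nonneg_left hL3 (abs_nonneg δ)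
        have e3 : |δ| * b ≤ (1/20) * b + 5 * (δ ^ 2 * b) := by
          nlinarith [mul_le_mul_of_nonneg_right hδs hb.le]
        nlinarith [habs, hb1, e2, e3, hbκ]
    -- assemble
    have hsplit : δ * (a - b) * wa = δ * (a - b) * wb + δ * ((b - a) * (wb - wa)) := by ring
    rw [hsplit]
    nlinarith [s2, s4, hκ0, hεκ, hawa, mul_nonneg (sq_nonneg δ) (mul_nonneg hb.le (sq_nonneg wb))]

/-- Lower bound for `ρ - 1 - log ρ`. -/
lemma frho_bound {ρ ε : ℝ} (h1 : 1 - ε ≤ ρ) (h2 : ρ ≤ 1 + ε) (hε : ε < 2/5) (hε0 : 0 < ε) :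
    (5 / 14) * (ρ - 1) ^ 2 ≤ ρ - 1 - Real.log ρ := by
  have hρ0 : 0 < ρ := by linarith
  rcases le_total 1 ρ with h | h
  · have hu := pade_upper h
    have hQ : (0:ℝ) < 2 * (2 * ρ + 1) := by linarith
    have hu2 : Real.log ρ * (2 * (2 * ρ + 1)) ≤ (ρ - 1) * (ρ + 5) := by
      rw [le_div_iff₀ hQ] at hu
      linarith
    have key : (5 / 14) * (ρ - 1) ^ 2 * (2 * (2 * ρ + 1))
        ≤ (ρ - 1 - Real.log ρ) * (2 * (2 * ρ + 1)) := by
      nlinarith [hu2, mul_nonneg (sq_nonneg (ρ - 1)) (by linarith : (0:ℝ) ≤ 16 - 10 * ρ)]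
    exact le_of_mul_le_mul_right key hQ
  · have ht : 1 ≤ ρ⁻¹ := by
      rw [show (ρ⁻¹ : ℝ) = 1 / ρ by ring, le_div_iff₀ hρ0]
      linarith
    have hk := pade2_lower ht
    rw [Real.log_inv] at hk
    have heq : 3 * ((ρ⁻¹) ^ 2 - 1) / ((ρ⁻¹) ^ 2 + 4 * ρ⁻¹ + 1)
        = 3 * (1 - ρ ^ 2) / (1 + 4 * ρ + ρ ^ 2) := by
      rw [div_eq_div_iff (by positivity) (by positivity)]
      field_simp
    rw [heq] at hk
    have hQ : (0:ℝ) < 1 + 4 * ρ + ρ ^ 2 := by positivity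
    have hk2 : 3 * (1 - ρ ^ 2) ≤ (-Real.log ρ) * (1 + 4 * ρ + ρ ^ 2) := by
      rw [div_le_iff₀ hQ] at hk
      linarith
    have key : (5 / 14) * (ρ - 1) ^ 2 * (1 + 4 * ρ + ρ ^ 2)
        ≤ (ρ - 1 - Real.log ρ) * (1 + 4 * ρ + ρ ^ 2) := by
      nlinarith [hk2, mul_nonneg (sq_nonneg (1 - ρ))
        (by nlinarith : (0:ℝ) ≤ 23 - 6 * ρ - 5 * ρ ^ 2)]
    exact le_of_mul_le_mul_right key hQ

lemma DPsi_identity {d : ℕ} (hd : 0 < d) (αt : ℝ) (y z : Fin d → ℝ)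
    (hy : ∀ k, 0 < y k) (hz : ∀ k, 0 < z k) :
    DPsi αt z y
      = (αt - 1) * (lmass z / lmass y - 1 - (Real.log (lmass z) - Real.log (lmass y)))
        + (∑ k, ((z k / lmass z) * (Real.log (z k / lmass z) - Real.log (y k / lmass y))
            + y k / lmass y - z k / lmass z))
        + (lmass z / lmass y - 1)
          * ∑ k, (y k / lmass y - z k / lmass z) * Real.log (y k / lmass y) := by
  have hP : 0 < lmass y := Finset.sum_pos (fun k _ => hy k) ⟨⟨0, hd⟩, Finset.mem_univ _⟩
  have hQ : 0 < lmass z := Finset.sum_pos (fun k _ => hz k) ⟨⟨0, hd⟩, Finset.mem_univ _⟩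
  simp only [DPsi, psiReg, gradPsi]
  set P := lmass y with hPdef
  set Q := lmass z with hQdef
  set HA := ∑ k, (y k / P) * Real.log (y k / P) with hHA
  set HB := ∑ k, (z k / Q) * Real.log (z k / Q) with hHB
  set C := ∑ k, (z k / Q) * Real.log (y k / P) with hC
  have hsy : ∑ k, y k = P := rfl
  have hsz : ∑ k, z k = Q := rfl
  have S1 : ∑ k, y k * Real.log (y k) = P * HA + P * Real.log P := by
    have step : ∀ k : Fin d, y k * Real.log (y k)
        = P * ((y k / P) * Real.log (y k / P)) + y k * Real.log P := by
      intro k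
      rw [Real.log_div (hy k).ne' hP.ne']
      field_simp
      ring
    rw [Finset.sum_congr rfl (fun k _ => step k), Finset.sum_add_distrib, ← Finset.mul_sum,
      ← Finset.sum_mul, hsy]
  have S2 : ∑ k, z k * Real.log (z k) = Q * HB + Q * Real.log Q := by
    have step : ∀ k : Fin d, z k * Real.log (z k)
        = Q * ((z k / Q) * Real.log (z k / Q)) + z k * Real.log Q := by
      intro k
      rw [Real.log_div (hz k).ne' hQ.ne']
      field_simp
      ring
    rw [Finset.sum_congr rfl (fun k _ => step k), Finset.sum_add_distrib, ← Finset.mul_sum,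
      ← Finset.sum_mul, hsz]
  have S3 : ∑ k, z k * Real.log (y k / P) = Q * C := by
    have step : ∀ k : Fin d, z k * Real.log (y k / P)
        = Q * ((z k / Q) * Real.log (y k / P)) := by
      intro k
      field_simp
    rw [Finset.sum_congr rfl (fun k _ => step k), ← Finset.mul_sum]
  have S4 : ∑ k, y k * Real.log (y k / P) = P * HA := by
    have step : ∀ k : Fin d, y k * Real.log (y k / P)
        = P * ((y k / P) * Real.log (y k / P)) := by
      intro k
      field_simp
    rw [Finset.sum_congr rfl (fun k _ => step k), ← Finset.mul_sum]
  have S6 : ∑ i, (-(αt - 1) / P - (1 / P) * HA + Real.log (y i / P) / P) * (z i - y i)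
      = (-(αt - 1) / P - (1 / P) * HA) * (Q - P) + (1 / P) * (Q * C) - (1 / P) * (P * HA) := by
    have step : ∀ i : Fin d, (-(αt - 1) / P - (1 / P) * HA + Real.log (y i / P) / P) * (z i - y i)
        = (-(αt - 1) / P - (1 / P) * HA) * (z i - y i)
          + (1 / P) * (z i * Real.log (y i / P)) - (1 / P) * (y i * Real.log (y i / P)) := by
      intro i
      ring
    rw [Finset.sum_congr rfl (fun i _ => step i)]
    rw [Finset.sum_sub_distrib, Finset.sum_add_distrib, ← Finset.mul_sum, ← Finset.mul_sum,
      ← Finset.mul_sum, S3, S4, Finset.sum_sub_distrib, hsy, hsz]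
  have S7 : ∑ k, ((z k / Q) * (Real.log (z k / Q) - Real.log (y k / P))
      + y k / P - z k / Q) = HB - C + 1 - 1 := by
    have step : ∀ k : Fin d, (z k / Q) * (Real.log (z k / Q) - Real.log (y k / P))
        + y k / P - z k / Q
        = ((z k / Q) * Real.log (z k / Q) - (z k / Q) * Real.log (y k / P))
          + (y k / P - z k / Q) := by
      intro k
      ring
    rw [Finset.sum_congr rfl (fun k _ => step k), Finset.sum_add_distrib,
      Finset.sum_sub_distrib, Finset.sum_sub_distrib, ← Finset.sum_div, ← Finset.sum_div,
      hsy, hsz, div_self hP.ne', div_self hQ.ne']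
    rw [hHB, hC]
    ring
  have S8 : ∑ k, (y k / P - z k / Q) * Real.log (y k / P) = HA - C := by
    have step : ∀ k : Fin d, (y k / P - z k / Q) * Real.log (y k / P)
        = (y k / P) * Real.log (y k / P) - (z k / Q) * Real.log (y k / P) := by
      intro k
      ring
    rw [Finset.sum_congr rfl (fun k _ => step k), Finset.sum_sub_distrib, hHA, hC]
  rw [S1, S2, S6, S7, S8]
  field_simp
  ring

lemma num_bound {A L : ℝ} (hA : 1 + 2 * L + 70 * L ^ 2 ≤ A) (hL : 0.6931 ≤ L) :
    0 ≤ (5 / 14) * A - (3 * L ^ 2 + 8) := by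
  nlinarith [sq_nonneg (L - 0.6931)]

lemma final_combine {A f K S δ ε L T : ℝ}
    (hf : (5 / 14) * δ ^ 2 ≤ f) (hA0 : 0 ≤ A)
    (hnum : 0 ≤ (5 / 14) * A - (3 * L ^ 2 + 8))
    (hK0 : 0 ≤ K) (hT2 : T ^ 2 ≤ 2 * K) (hε0 : 0 ≤ ε) (hε1 : ε ≤ 1)
    (hδS : -((1 + ε) / 2) * K - δ ^ 2 * (3 * L ^ 2 + 8) ≤ S) :
    ((1 - ε) / 4) * T ^ 2 ≤ A * f + K + S := by
  have h1 : A * ((5 / 14) * δ ^ 2) ≤ A * f := mul_le_mul_of_nonneg_left hf hA0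
  have h2 : 0 ≤ ((5 / 14) * A - (3 * L ^ 2 + 8)) * δ ^ 2 := mul_nonneg hnum (sq_nonneg δ)
  have h3 : ((1 - ε) / 4) * T ^ 2 ≤ ((1 - ε) / 4) * (2 * K) :=
    mul_le_mul_of_nonneg_left hT2 (by linarith)
  nlinarith [h1, h2, h3, hδS]


set_option maxHeartbeats 2000000 in
/-- curvature on the action simplex under mass stability:
if `ρ = Λ(z)/Λ(y) ∈ [1−ε, 1+ε]` with `ε ∈ (0, 2/5)`, then
`D_ψ(z‖y) ≥ ((1−ε)/4)·‖θ − x‖₁²` where `x = y/Λ(y)`, `θ = z/Λ(z)`. -/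
theorem bregman_curvature_action_simplex (d : ℕ) (hd : 2 ≤ d)
    (β : ℝ) (hβ : 70 ≤ β)
    (αt : ℝ) (hαt : αt = 2 + 2 * Real.log d + β * (Real.log d) ^ 2)
    (y z : Fin d → ℝ)
    (hy : ∀ k, 0 < y k) (hyΛ : lmass y ≤ 1)
    (hz : ∀ k, 0 < z k) (hzΛ : lmass z ≤ 1)
    (x θ : Fin d → ℝ) (hx : ∀ k, x k = y k / lmass y) (hθ : ∀ k, θ k = z k / lmass z)
    (ρ : ℝ) (hρ : ρ = lmass z / lmass y)
    (ε : ℝ) (hε : ε ∈ Set.Ioo (0:ℝ) (2/5))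
    (hstab : ρ ∈ Set.Icc (1 - ε) (1 + ε)) :
    ((1 - ε) / 4) * (∑ k, |θ k - x k|) ^ 2 ≤ DPsi αt z y := by
  obtain ⟨hε0, hε2⟩ := hε
  obtain ⟨hst1, hst2⟩ := hstab
  have hd0 : 0 < d := by omega
  have hP : 0 < lmass y := Finset.sum_pos (fun k _ => hy k) ⟨⟨0, hd0⟩, Finset.mem_univ _⟩
  have hQ : 0 < lmass z := Finset.sum_pos (fun k _ => hz k) ⟨⟨0, hd0⟩, Finset.mem_univ _⟩
  set P := lmass y with hPdef
  set Q := lmass z with hQdef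
  set a : Fin d → ℝ := fun k => y k / P with hadef
  set b : Fin d → ℝ := fun k => z k / Q with hbdef
  have ha : ∀ k, 0 < a k := fun k => div_pos (hy k) hP
  have hb : ∀ k, 0 < b k := fun k => div_pos (hz k) hQ
  have hsa : ∑ k, a k = 1 := by
    rw [hadef, ← Finset.sum_div]
    exact div_self hP.ne'
  have hsb : ∑ k, b k = 1 := by
    rw [hbdef, ← Finset.sum_div]
    exact div_self hQ.ne'
  have ha1 : ∀ k, a k ≤ 1 := by
    intro k
    rw [hadef]
    rw [div_le_one hP]
    exact Finset.single_le_sum (fun i _ => (hy i).le) (Finset.mem_univ k)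
  have hb1 : ∀ k, b k ≤ 1 := by
    intro k
    rw [hbdef]
    rw [div_le_one hQ]
    exact Finset.single_le_sum (fun i _ => (hz i).le) (Finset.mem_univ k)
  -- notation
  set δ : ℝ := ρ - 1 with hδdef
  set Dr : ℝ := (d : ℝ) with hDrdef
  have hDr2 : (2:ℝ) ≤ Dr := by
    rw [hDrdef]
    exact_mod_cast hd
  have hDr1 : (1:ℝ) ≤ Dr := by linarith
  have hDr0 : (0:ℝ) < Dr := lt_of_lt_of_le one_pos hDr1
  set L : ℝ := Real.log Dr with hLdef
  have hL : 0.6931 ≤ L := by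
    have h2 : Real.log 2 ≤ L := by
      rw [hLdef]
      exact Real.log_le_log (by norm_num) hDr2
    linarith [Real.log_two_gt_d9]
  have hδabs : |δ| ≤ ε := by
    rw [hδdef]
    rw [abs_le]
    constructor <;> linarith
  -- the three sums
  set K : ℝ := ∑ k, (b k * (Real.log (b k) - Real.log (a k)) + a k - b k) with hKdef
  set T : ℝ := ∑ k, |b k - a k| with hTdef
  have hK0 : 0 ≤ K := Finset.sum_nonneg (fun k _ => kl_nonneg' (ha k) (hb k))
  have hT2 : T ^ 2 ≤ 2 * K := pinsker a b ha hb hsa hsb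
  -- identity
  have hiden : DPsi αt z y = (αt - 1) * (ρ - 1 - Real.log ρ) + K
      + δ * ∑ k, (a k - b k) * Real.log (a k) := by
    rw [DPsi_identity hd0 αt y z hy hz]
    have hlogρ : Real.log ρ = Real.log Q - Real.log P := by
      rw [hρ]
      exact Real.log_div hQ.ne' hP.ne'
    rw [hlogρ, ← hρ]
  -- shift sum
  have hshift : ∑ k, (a k - b k) * Real.log (a k * Dr)
      = ∑ k, (a k - b k) * Real.log (a k) := by
    have step : ∀ k : Fin d, (a k - b k) * Real.log (a k * Dr)
        = (a k - b k) * Real.log (a k) + ((a k - b k) * Real.log Dr) := by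
      intro k
      rw [Real.log_mul (ha k).ne' hDr0.ne']
      ring
    rw [Finset.sum_congr rfl (fun k _ => step k), Finset.sum_add_distrib, ← Finset.sum_mul,
      Finset.sum_sub_distrib, hsa, hsb]
    ring
  -- per-coordinate bound summed
  have hpc : ∑ k, (-((1 + ε) / 2) * (b k * (Real.log (b k) - Real.log (a k)) + a k - b k)
        - δ ^ 2 * (a k * (Real.log (a k * Dr)) ^ 2 + 2 * b k * (Real.log (b k * Dr)) ^ 2
          + 5 * b k))
      ≤ ∑ k, δ * (a k - b k) * Real.log (a k * Dr) :=
    Finset.sum_le_sum (fun k _ => percoord (ha k) (hb k) hDr1 hδabs (le_of_lt hε2))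
  have hpcl : ∑ k, (-((1 + ε) / 2) * (b k * (Real.log (b k) - Real.log (a k)) + a k - b k)
        - δ ^ 2 * (a k * (Real.log (a k * Dr)) ^ 2 + 2 * b k * (Real.log (b k * Dr)) ^ 2
          + 5 * b k))
      = -((1 + ε) / 2) * K - δ ^ 2 * ∑ k, (a k * (Real.log (a k * Dr)) ^ 2
          + 2 * b k * (Real.log (b k * Dr)) ^ 2 + 5 * b k) := by
    rw [Finset.sum_sub_distrib, ← Finset.mul_sum, ← Finset.mul_sum, hKdef]
  have hpcr : ∑ k, δ * (a k - b k) * Real.log (a k * Dr)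
      = δ * ∑ k, (a k - b k) * Real.log (a k) := by
    rw [← hshift, Finset.mul_sum]
    exact Finset.sum_congr rfl (fun k _ => by ring)
  -- energy bound
  have hEa : ∑ k, a k * (Real.log (a k * Dr)) ^ 2 ≤ L ^ 2 + 1 := by
    have step : ∀ k : Fin d, a k * (Real.log (a k * Dr)) ^ 2 ≤ a k * L ^ 2 + 1 / Dr :=
      fun k => energy_pc (ha k) (ha1 k) hDr1
    calc ∑ k, a k * (Real.log (a k * Dr)) ^ 2 ≤ ∑ k, (a k * L ^ 2 + 1 / Dr) :=
          Finset.sum_le_sum (fun k _ => step k)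
      _ = L ^ 2 + 1 := by
          rw [Finset.sum_add_distrib, ← Finset.sum_mul, hsa, Finset.sum_const,
            Finset.card_univ, Fintype.card_fin]
          rw [hDrdef]
          rw [nsmul_eq_mul, mul_one_div_cancel (by exact_mod_cast hd0.ne'), one_mul]
  have hEb : ∑ k, b k * (Real.log (b k * Dr)) ^ 2 ≤ L ^ 2 + 1 := by
    have step : ∀ k : Fin d, b k * (Real.log (b k * Dr)) ^ 2 ≤ b k * L ^ 2 + 1 / Dr :=
      fun k => energy_pc (hb k) (hb1 k) hDr1
    calc ∑ k, b k * (Real.log (b k * Dr)) ^ 2 ≤ ∑ k, (b k * L ^ 2 + 1 / Dr) :=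
          Finset.sum_le_sum (fun k _ => step k)
      _ = L ^ 2 + 1 := by
          rw [Finset.sum_add_distrib, ← Finset.sum_mul, hsb, Finset.sum_const,
            Finset.card_univ, Fintype.card_fin]
          rw [hDrdef]
          rw [nsmul_eq_mul, mul_one_div_cancel (by exact_mod_cast hd0.ne'), one_mul]
  have hE : ∑ k, (a k * (Real.log (a k * Dr)) ^ 2 + 2 * b k * (Real.log (b k * Dr)) ^ 2
      + 5 * b k) ≤ 3 * L ^ 2 + 8 := by
    have e2 : ∑ k, 2 * b k * (Real.log (b k * Dr)) ^ 2
        = 2 * ∑ k, b k * (Real.log (b k * Dr)) ^ 2 := by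
      rw [Finset.mul_sum]
      exact Finset.sum_congr rfl (fun k _ => by ring)
    have e3 : ∑ k, (5:ℝ) * b k = 5 := by
      rw [← Finset.mul_sum, hsb, mul_one]
    have e1 : ∑ k, (a k * (Real.log (a k * Dr)) ^ 2 + 2 * b k * (Real.log (b k * Dr)) ^ 2
        + 5 * b k) = (∑ k, a k * (Real.log (a k * Dr)) ^ 2)
          + 2 * (∑ k, b k * (Real.log (b k * Dr)) ^ 2) + 5 := by
      rw [Finset.sum_add_distrib, Finset.sum_add_distrib, e2, e3]
    rw [e1]
    linarith
  have hTeq : ∑ k, |θ k - x k| = T := by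
    rw [hTdef]
    apply Finset.sum_congr rfl
    intro k _
    rw [hx k, hθ k, abs_sub_comm]
  rw [hpcl, hpcr] at hpc
  clear_value P Q a b δ Dr L K T
  -- f(ρ) bound
  have hf : (5 / 14) * δ ^ 2 ≤ ρ - 1 - Real.log ρ := by
    rw [hδdef]
    exact frho_bound hst1 hst2 hε2 hε0
  have hA : 1 + 2 * L + 70 * L ^ 2 ≤ αt - 1 := by
    rw [hαt]
    have := mul_nonneg (by linarith : (0:ℝ) ≤ β - 70) (sq_nonneg L)
    nlinarith [this]
  have hA0 : (0:ℝ) ≤ αt - 1 := by nlinarith [hA, hL, sq_nonneg L]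
  have hnum : 0 ≤ (5 / 14) * (αt - 1) - (3 * L ^ 2 + 8) := num_bound hA hL
  -- final chain
  have hδS : -((1 + ε) / 2) * K - δ ^ 2 * (3 * L ^ 2 + 8)
      ≤ δ * ∑ k, (a k - b k) * Real.log (a k) := by
    have h1 : δ ^ 2 * ∑ k, (a k * (Real.log (a k * Dr)) ^ 2
        + 2 * b k * (Real.log (b k * Dr)) ^ 2 + 5 * b k) ≤ δ ^ 2 * (3 * L ^ 2 + 8) :=
      mul_le_mul_of_nonneg_left hE (sq_nonneg δ)
    linarith
  rw [hTeq, hiden]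
  exact final_combine hf hA0 hnum hK0 hT2 (le_of_lt hε0) (by linarith) hδS

end BregmanAux
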